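/- Let V be a finite type and E : V → V → Prop a relation with no directed cycles (¬ Relation.TransGen E v v for every v). If E is extremely reduced, then E is strongly reduced. -/

import Mathlib

/-- A directed path of length `k` in `(V, E)`: a map `p : Fin (k+1) → V` with
`E (p i) (p (i+1))` for all `i < k`. -/
def IsDirPath {V : Type*} (E : V → V → Prop) (k : ℕ) (p : Fin (k + 1) → V) : Prop :=
  ∀ i : Fin k, E (p i.castSucc) (p i.succ)

/-- A directed path of length `k` from `v` to `w`. -/
def IsDirPathFromTo {V : Type*} (E : V → V → Prop) (k : ℕ) (p : Fin (k + 1) → V)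
    (v w : V) : Prop :=
  p 0 = v ∧ p (Fin.last k) = w ∧ IsDirPath E k p

/-- A topological order of `(V, E)`: an injective map `f : V → ℕ` with `f u < f v`
whenever `E u v`. -/
def IsTopologicalOrder {V : Type*} (E : V → V → Prop) (f : V → ℕ) : Prop :=
  Function.Injective f ∧ ∀ u v : V, E u v → f u < f v

/-- `L` is the list of the elements of `S`, sorted in strictly increasing order of `f`. -/
def IsSortedListOf {V : Type*} (f : V → ℕ) (S : Set V) (L : List V) : Prop :=
  (∀ x : V, x ∈ L ↔ x ∈ S) ∧ L.Pairwise fun x y => f x < f y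

/-- The list `L` is a directed path from `v` to `w`: its first element is `v`, its last
element is `w`, and consecutive elements are related by `E`. -/
def IsDirPathList {V : Type*} (E : V → V → Prop) (v w : V) (L : List V) : Prop :=
  L.head? = some v ∧ L.getLast? = some w ∧ L.Chain' E

/-- `E` is strongly reduced: for every topological order `f`, every pair of vertices `v, w`
and every two directed paths `γ, γ'` from `v` to `w`, the list of vertices of the union of
the vertex sets of `γ` and `γ'`, sorted in strictly increasing order of `f`, is a directed
path from `v` to `w`. -/
def StronglyReduced {V : Type*} (E : V → V → Prop) : Prop :=
  ∀ f : V → ℕ, IsTopologicalOrder E f →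
    ∀ (v w : V) (k k' : ℕ) (γ : Fin (k + 1) → V) (γ' : Fin (k' + 1) → V),
      IsDirPathFromTo E k γ v w → IsDirPathFromTo E k' γ' v w →
        ∀ L : List V, IsSortedListOf f (Set.range γ ∪ Set.range γ') L →
          IsDirPathList E v w L

/-- `E` is extremely reduced: any two non-adjacent vertices with a common ancestor have no
common descendant. -/
def ExtremelyReduced {V : Type*} (E : V → V → Prop) : Prop :=
  ∀ x y : V, ¬E x y → ¬E y x →
    (∃ a : V, Relation.TransGen E a x ∧ Relation.TransGen E a y) →
      ¬∃ b : V, Relation.TransGen E x b ∧ Relation.TransGen E y b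

section Aux

variable {V : Type*} {E : V → V → Prop} {k : ℕ} {p : Fin (k + 1) → V}

lemma path_transGen (hp : IsDirPath E k p) :
    ∀ j i : Fin (k + 1), (i : ℕ) < (j : ℕ) → Relation.TransGen E (p i) (p j) := by
  intro j
  induction j using Fin.induction with
  | zero => intro i hi; simp at hi
  | succ j ih =>
    intro i hi
    have hi' : (i : ℕ) < (j : ℕ) + 1 := by simpa using hi
    rcases Nat.lt_succ_iff_lt_or_eq.mp hi' with h | h
    · exact (ih i (by simpa using h)).tail (hp j)
    · have : i = j.castSucc := Fin.ext (by simpa using h)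
      rw [this]; exact Relation.TransGen.single (hp j)

lemma path_mem_facts (hp : IsDirPath E k p) {x : V} (hx : x ∈ Set.range p) :
    (x = p 0 ∨ Relation.TransGen E (p 0) x) ∧
    (x = p (Fin.last k) ∨ Relation.TransGen E x (p (Fin.last k))) ∧
    (x = p 0 ∨ ∃ z ∈ Set.range p, E z x) ∧
    (x = p (Fin.last k) ∨ ∃ u ∈ Set.range p, E x u) := by
  obtain ⟨i, rfl⟩ := hx
  refine ⟨?_, ?_, ?_, ?_⟩
  · rcases eq_or_ne i 0 with rfl | h
    · exact Or.inl rfl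
    · refine Or.inr (path_transGen hp i 0 ?_)
      have : (i : ℕ) ≠ 0 := fun hv => h (Fin.ext hv)
      simp only [Fin.val_zero]; omega
  · rcases eq_or_ne i (Fin.last k) with rfl | h
    · exact Or.inl rfl
    · refine Or.inr (path_transGen hp (Fin.last k) i ?_)
      have h1 : (i : ℕ) ≤ k := Nat.lt_succ_iff.mp i.isLt
      have h2 : (i : ℕ) ≠ k := fun hv => h (Fin.ext (by simpa using hv))
      simpa using lt_of_le_of_ne h1 h2
  · induction i using Fin.cases with
    | zero => exact Or.inl rfl
    | succ j => exact Or.inr ⟨p j.castSucc, ⟨j.castSucc, rfl⟩, hp j⟩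
  · induction i using Fin.lastCases with
    | last => exact Or.inl rfl
    | cast j => exact Or.inr ⟨p j.succ, ⟨j.succ, rfl⟩, hp j⟩

end Aux

theorem extremelyReduced_imp_stronglyReduced {V : Type*} [Fintype V] (E : V → V → Prop)
    (hacyc : ∀ v : V, ¬Relation.TransGen E v v)
    (her : ExtremelyReduced E) : StronglyReduced E := by
  intro f hf v w k k' γ γ' hγ hγ' L hL
  obtain ⟨hfinj, hfmono⟩ := hf
  obtain ⟨hγ0, hγl, hγp⟩ := hγ
  obtain ⟨hγ'0, hγ'l, hγ'p⟩ := hγ'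
  obtain ⟨hmem, hsort⟩ := hL
  set S := Set.range γ ∪ Set.range γ' with hS
  have ftrans : ∀ a b : V, Relation.TransGen E a b → f a < f b := by
    intro a b h
    induction h with
    | single h => exact hfmono _ _ h
    | tail _ h₃ ih => exact ih.trans (hfmono _ _ h₃)
  have key : ∀ x ∈ S, (x = v ∨ Relation.TransGen E v x) ∧
      (x = w ∨ Relation.TransGen E x w) ∧
      (x = v ∨ ∃ z ∈ S, E z x) ∧ (x = w ∨ ∃ u ∈ S, E x u) := by
    intro x hx
    rcases hx with hx | hx
    · have h := path_mem_facts hγp hx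
      rw [hγ0, hγl] at h
      exact ⟨h.1, h.2.1,
        h.2.2.1.imp id (fun ⟨z, hz, he⟩ => ⟨z, Or.inl hz, he⟩),
        h.2.2.2.imp id (fun ⟨u, hu, he⟩ => ⟨u, Or.inl hu, he⟩)⟩
    · have h := path_mem_facts hγ'p hx
      rw [hγ'0, hγ'l] at h
      exact ⟨h.1, h.2.1,
        h.2.2.1.imp id (fun ⟨z, hz, he⟩ => ⟨z, Or.inr hz, he⟩),
        h.2.2.2.imp id (fun ⟨u, hu, he⟩ => ⟨u, Or.inr hu, he⟩)⟩
  have hle : ∀ x ∈ S, f v ≤ f x ∧ f x ≤ f w := by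
    intro x hx
    obtain ⟨h1, h2, -, -⟩ := key x hx
    constructor
    · rcases h1 with rfl | h; · exact le_rfl
      exact (ftrans _ _ h).le
    · rcases h2 with rfl | h; · exact le_rfl
      exact (ftrans _ _ h).le
  have hvS : v ∈ S := Or.inl ⟨0, hγ0⟩
  have hwS : w ∈ S := Or.inl ⟨Fin.last k, hγl⟩
  have hvL : v ∈ L := (hmem v).mpr hvS
  have hwL : w ∈ L := (hmem w).mpr hwS
  have hLne : L ≠ [] := by rintro rfl; simp at hvL
  have pg : ∀ i j : Fin L.length, i < j → f (L.get i) < f (L.get j) :=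
    List.pairwise_iff_get.mp hsort
  have pgle : ∀ i j : Fin L.length, (i : ℕ) ≤ (j : ℕ) → f (L.get i) ≤ f (L.get j) := by
    intro i j hij
    rcases lt_or_eq_of_le hij with h | h
    · exact (pg i j h).le
    · rw [Fin.ext h]
  -- head is v
  have hlen : 0 < L.length := List.length_pos_iff.mpr hLne
  obtain ⟨jv, hjv⟩ := List.mem_iff_get.mp hvL
  obtain ⟨jw, hjw⟩ := List.mem_iff_get.mp hwL
  have hhead : L.head? = some v := by
    rw [List.head?_eq_head hLne]
    congr 1
    have hh : L.head hLne = L.get ⟨0, hlen⟩ := by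
      simp [List.head_eq_getElem_zero hLne]
    rw [hh]
    have h1 : f (L.get ⟨0, hlen⟩) ≤ f (L.get jv) := pgle _ _ (Nat.zero_le _)
    rw [hjv] at h1
    have h2 : f v ≤ f (L.get ⟨0, hlen⟩) :=
      (hle _ ((hmem _).mp (List.get_mem _ _))).1
    exact hfinj (le_antisymm h1 h2)
  have hlast : L.getLast? = some w := by
    rw [List.getLast?_eq_getLast_of_ne_nil hLne]
    congr 1
    have hlt : L.length - 1 < L.length := by omega
    have hh : L.getLast hLne = L.get ⟨L.length - 1, hlt⟩ := by
      simp [List.getLast_eq_getElem]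
    rw [hh]
    have h1 : f (L.get jw) ≤ f (L.get ⟨L.length - 1, hlt⟩) :=
      pgle _ _ (by have := jw.isLt; simp; omega)
    rw [hjw] at h1
    have h2 : f (L.get ⟨L.length - 1, hlt⟩) ≤ f w :=
      (hle _ ((hmem _).mp (List.get_mem _ _))).2
    exact hfinj (le_antisymm h2 h1)
  refine ⟨hhead, hlast, ?_⟩
  refine List.isChain_iff_getElem.mpr ?_
  intro i hi
  show E (L.get ⟨i, by omega⟩) (L.get ⟨i + 1, by omega⟩)
  set x := L.get ⟨i, by omega⟩ with hx
  set y := L.get ⟨i + 1, by omega⟩ with hy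
  have hxS : x ∈ S := (hmem x).mp (List.get_mem _ _)
  have hyS : y ∈ S := (hmem y).mp (List.get_mem _ _)
  have hfxy : f x < f y := pg _ _ (by simp)
  have consec : ∀ z ∈ S, f z ≤ f x ∨ f y ≤ f z := by
    intro z hz
    obtain ⟨j, hj⟩ := List.mem_iff_get.mp ((hmem z).mpr hz)
    rcases le_or_gt (j : ℕ) i with h | h
    · left; rw [← hj]; exact pgle _ _ h
    · right; rw [← hj]; exact pgle _ _ h
  by_contra hxy
  have hyx : ¬ E y x := fun h => absurd (hfmono _ _ h) (by omega)
  have hyv : y ≠ v := by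
    intro h
    have := (hle x hxS).1
    rw [← h] at this; omega
  have hxw : x ≠ w := by
    intro h
    have := (hle y hyS).2
    rw [← h] at this; omega
  -- predecessor of y
  obtain ⟨z, hzS, hzy⟩ := (key y hyS).2.2.1.resolve_left hyv
  obtain ⟨u, huS, hxu⟩ := (key x hxS).2.2.2.resolve_left hxw
  have hfz : f z < f y := hfmono _ _ hzy
  have hfu : f x < f u := hfmono _ _ hxu
  have hfzx : f z ≤ f x := (consec z hzS).resolve_right (by omega)
  have hfyu : f y ≤ f u := (consec u huS).resolve_left (by omega)
  rcases eq_or_ne x v with rfl | hxv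
  · -- x = v : then z = x
    have : f x ≤ f z := (hle z hzS).1
    have : z = x := hfinj (by omega)
    exact hxy (this ▸ hzy)
  rcases eq_or_ne y w with rfl | hyw
  · have : f u ≤ f y := (hle u huS).2
    have : u = y := hfinj (by omega)
    exact hxy (this ▸ hxu)
  · refine her x y hxy hyx ⟨v, ?_, ?_⟩ ⟨w, ?_, ?_⟩
    · exact ((key x hxS).1).resolve_left hxv
    · exact ((key y hyS).1).resolve_left hyv
    · exact ((key x hxS).2.1).resolve_left hxw
    · exact ((key y hyS).2.1).resolve_left hyw
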